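/- Let ℓ ≥ 2 and n ≥ 1. The map sending an n-partition p of the set {0, 1, …, ℓ−2} (the first ℓ−1 elements of Fin ℓ) to the n-partition of Fin ℓ obtained by inserting the element ℓ−1 into the block of p that contains 0 is a bijection from the set of all n-partitions of {0, …, ℓ−2} onto the set of irreducible n-partitions of Fin ℓ in which 0 and ℓ−1 lie in the same block. In particular, the number of irreducible n-partitions of Fin ℓ in which 0 and ℓ−1 lie in the same block equals S(ℓ−1, n). -/

import Mathlib

/-- An `n`-partition of `Fin ℓ` is reducible if some nonempty proper subset of its blocks
has union `{i : Fin ℓ | (i : ℕ) < j}` for some `1 ≤ j < ℓ`. -/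
def Reducible {ℓ : ℕ} (P : Finpartition (Finset.univ : Finset (Fin ℓ))) : Prop :=
  ∃ j : ℕ, 1 ≤ j ∧ j < ℓ ∧ ∃ B : Finset (Finset (Fin ℓ)),
    B.Nonempty ∧ B ⊂ P.parts ∧ B.sup id = Finset.univ.filter (fun i : Fin ℓ => (i : ℕ) < j)

/-- `S ℓ n`: the number of `n`-partitions of `Fin ℓ` (Stirling number of the second kind). -/
noncomputable def S (ℓ n : ℕ) : ℕ :=
  Nat.card {P : Finpartition (Finset.univ : Finset (Fin ℓ)) // P.parts.card = n}

/-- `I ℓ n`: the number of irreducible `n`-partitions of `Fin ℓ`. -/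
noncomputable def I (ℓ n : ℕ) : ℕ :=
  Nat.card {P : Finpartition (Finset.univ : Finset (Fin ℓ)) // P.parts.card = n ∧ ¬ Reducible P}

open Finset

namespace StirlingAux


variable {α β : Type*} [DecidableEq α] [DecidableEq β]

/-- Transport a finpartition along an embedding. -/
def mapEmbed (f : α ↪ β) {s : Finset α} (P : Finpartition s) : Finpartition (s.map f) where
  parts := P.parts.map (Finset.mapEmbedding f).toEmbedding
  supIndep := by
    rw [Finset.supIndep_iff_pairwiseDisjoint]
    rintro x hx y hy hne
    simp only [Finset.mem_coe, Finset.mem_map, Finset.mapEmbedding_apply] at hx hy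
    obtain ⟨a, ha, rfl⟩ := hx
    obtain ⟨b, hb, rfl⟩ := hy
    have hab : a ≠ b := fun h => hne (by rw [h])
    have := (Finset.supIndep_iff_pairwiseDisjoint.mp P.supIndep) ha hb hab
    simp only [Function.onFun, id] at this ⊢
    show Disjoint (a.map f) (b.map f)
    exact (Finset.disjoint_map f).mpr this
  sup_parts := by
    ext x
    simp only [Finset.mem_sup, Finset.mem_map, Finset.mapEmbedding_apply, id]
    constructor
    · rintro ⟨t, ⟨c, hc, rfl⟩, hx⟩
      obtain ⟨a, ha, rfl⟩ := Finset.mem_map.mp hx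
      exact ⟨a, by rw [← P.sup_parts]; exact Finset.mem_sup.mpr ⟨c, hc, ha⟩, rfl⟩
    · rintro ⟨a, ha, rfl⟩
      rw [← P.sup_parts] at ha
      obtain ⟨c, hc, hac⟩ := Finset.mem_sup.mp ha
      exact ⟨c.map f, ⟨c, hc, rfl⟩, Finset.mem_map_of_mem f hac⟩
  bot_notMem := by
    simp only [Finset.bot_eq_empty, Finset.mem_map, Finset.mapEmbedding_apply]
    rintro ⟨c, hc, h⟩
    have h' : c.map f = ∅ := h
    exact P.bot_notMem (by rwa [Finset.map_eq_empty.mp h'] at hc)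

@[simp] lemma parts_mapEmbed (f : α ↪ β) {s : Finset α} (P : Finpartition s) :
    (mapEmbed f P).parts = P.parts.map (Finset.mapEmbedding f).toEmbedding := rfl

lemma mapEmbed_injective (f : α ↪ β) (s : Finset α) :
    Function.Injective (mapEmbed f (s := s)) := by
  intro P Q h
  have := congrArg Finpartition.parts h
  simp only [parts_mapEmbed] at this
  exact Finpartition.ext (Finset.map_injective (Finset.mapEmbedding f).toEmbedding this)

lemma mapEmbed_surjective (f : α ↪ β) (s : Finset α) :
    Function.Surjective (mapEmbed f (s := s)) := by
  classical
  intro Q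
  have hpre : ∀ c ∈ Q.parts, (c.preimage f f.injective.injOn).map f = c := by
    intro c hc
    rw [Finset.map_eq_image, Finset.image_preimage]
    rw [Finset.filter_true_of_mem]
    intro x hx
    obtain ⟨a, _, rfl⟩ := Finset.mem_map.mp (Q.le hc hx)
    exact ⟨a, rfl⟩
  have hsub : ∀ c ∈ Q.parts, ∀ x ∈ c.preimage f f.injective.injOn, x ∈ s := by
    intro c hc x hx
    rw [Finset.mem_preimage] at hx
    obtain ⟨a, ha, hax⟩ := Finset.mem_map.mp (Q.le hc hx)
    rwa [← f.injective hax]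
  refine ⟨⟨Q.parts.image (fun c => c.preimage f f.injective.injOn), ?_, ?_, ?_⟩, ?_⟩
  · rw [Finset.supIndep_iff_pairwiseDisjoint]
    rintro x hx y hy hne
    simp only [Finset.mem_coe, Finset.mem_image] at hx hy
    obtain ⟨c, hc, rfl⟩ := hx
    obtain ⟨c', hc', rfl⟩ := hy
    have hcc : c ≠ c' := by rintro rfl; exact hne rfl
    have := Q.disjoint hc hc' hcc
    simp only [Function.onFun, id] at this ⊢
    rw [Finset.disjoint_left] at this ⊢
    intro a ha ha'
    rw [Finset.mem_preimage] at ha ha'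
    exact this ha ha'
  · ext x
    simp only [Finset.sup_image, Finset.mem_sup, id]
    constructor
    · rintro ⟨c, hc, hx⟩
      exact hsub c hc x hx
    · intro hx
      have : f x ∈ s.map f := Finset.mem_map_of_mem f hx
      rw [← Q.sup_parts] at this
      obtain ⟨c, hc, hfc⟩ := Finset.mem_sup.mp this
      refine ⟨c, hc, ?_⟩
      show x ∈ c.preimage f f.injective.injOn
      rw [Finset.mem_preimage]
      exact hfc
  · simp only [Finset.bot_eq_empty, Finset.mem_image]
    rintro ⟨c, hc, h⟩
    apply Q.bot_notMem
    have h2 := hpre c hc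
    rw [h] at h2
    simp only [Finset.map_empty] at h2
    rw [Finset.bot_eq_empty, h2]
    exact hc
  · apply Finpartition.ext
    simp only [parts_mapEmbed, Finset.map_eq_image, Finset.image_image]
    nth_rewrite 2 [← Finset.image_id (s := Q.parts)]
    refine Finset.image_congr fun c hc => ?_
    show (c.preimage f f.injective.injOn).map f = id c
    exact hpre c hc


variable {ℓ : ℕ}

lemma lt1 (hℓ : 2 ≤ ℓ) : ℓ - 1 < ℓ := by omega
lemma lt0 (hℓ : 2 ≤ ℓ) : 0 < ℓ := by omega

lemma L_not_mem (hℓ : 2 ≤ ℓ)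
    {p : Finpartition (Finset.univ.filter fun i : Fin ℓ => (i : ℕ) < ℓ - 1)}
    {t : Finset (Fin ℓ)} (ht : t ∈ p.parts) : (⟨ℓ - 1, by omega⟩ : Fin ℓ) ∉ t := by
  intro hmem
  have := p.le ht hmem
  simp at this

lemma z_mem_filter (hℓ : 2 ≤ ℓ) :
    (⟨0, by omega⟩ : Fin ℓ) ∈ Finset.univ.filter (fun i : Fin ℓ => (i : ℕ) < ℓ - 1) := by
  simp
  omega

/-- Insert `ℓ-1` into the block containing `0`. -/
def insertLast (hℓ : 2 ≤ ℓ)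
    (p : Finpartition (Finset.univ.filter fun i : Fin ℓ => (i : ℕ) < ℓ - 1)) :
    Finpartition (Finset.univ : Finset (Fin ℓ)) where
  parts := insert (insert ⟨ℓ - 1, lt1 hℓ⟩ (p.part ⟨0, lt0 hℓ⟩))
      (p.parts.erase (p.part ⟨0, lt0 hℓ⟩))
  supIndep := by
    have hb0 := p.part_mem.mpr (z_mem_filter hℓ)
    rw [Finset.supIndep_iff_pairwiseDisjoint, Finset.coe_insert]
    apply Set.PairwiseDisjoint.insert
    · exact (Finset.supIndep_iff_pairwiseDisjoint.mp p.supIndep).subset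
        (by intro x hx; exact Finset.mem_of_mem_erase hx)
    · intro t ht _
      rw [Finset.mem_coe, Finset.mem_erase] at ht
      show Disjoint (insert (⟨ℓ - 1, lt1 hℓ⟩ : Fin ℓ) (p.part ⟨0, lt0 hℓ⟩)) t
      rw [Finset.disjoint_insert_left]
      exact ⟨L_not_mem hℓ ht.2, p.disjoint hb0 ht.2 (Ne.symm ht.1)⟩
  sup_parts := by
    ext x
    refine ⟨fun _ => Finset.mem_univ x, fun _ => ?_⟩
    simp only [Finset.sup_insert, id_eq, Finset.sup_eq_union, Finset.mem_union]
    by_cases hxL : x = (⟨ℓ - 1, by omega⟩ : Fin ℓ)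
    · subst hxL
      exact Or.inl (Finset.mem_insert_self _ _)
    · have hxD : x ∈ Finset.univ.filter (fun i : Fin ℓ => (i : ℕ) < ℓ - 1) := by
        have hx := x.isLt
        simp only [Finset.mem_filter, Finset.mem_univ, true_and]
        rw [Fin.ext_iff] at hxL
        simp only [] at hxL
        omega
      obtain ⟨t, ht, hxt⟩ := p.exists_mem hxD
      by_cases htb : t = p.part ⟨0, by omega⟩
      · exact Or.inl (Finset.mem_insert_of_mem (htb ▸ hxt))
      · refine Or.inr (Finset.mem_sup.mpr ⟨t, Finset.mem_erase.mpr ⟨htb, ht⟩, ?_⟩)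
        exact hxt
  bot_notMem := by
    rw [Finset.bot_eq_empty]
    intro h
    rcases Finset.mem_insert.mp h with h | h
    · exact (Finset.insert_ne_empty _ _) h.symm
    · exact p.bot_notMem (Finset.mem_of_mem_erase h)

lemma parts_insertLast_def (hℓ : 2 ≤ ℓ)
    (p : Finpartition (Finset.univ.filter fun i : Fin ℓ => (i : ℕ) < ℓ - 1)) :
    (insertLast hℓ p).parts
      = insert (insert ⟨ℓ - 1, by omega⟩ (p.part ⟨0, by omega⟩))
          (p.parts.erase (p.part ⟨0, by omega⟩)) := rfl

lemma parts_insertLast (hℓ : 2 ≤ ℓ)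
    (p : Finpartition (Finset.univ.filter fun i : Fin ℓ => (i : ℕ) < ℓ - 1))
    {b : Finset (Fin ℓ)} (hb : b ∈ p.parts) (hzb : (⟨0, by omega⟩ : Fin ℓ) ∈ b) :
    (insertLast hℓ p).parts
      = insert (insert ⟨ℓ - 1, by omega⟩ b) (p.parts.erase b) := by
  have h : p.part ⟨0, by omega⟩ = b := p.part_eq_of_mem hb hzb
  rw [parts_insertLast_def hℓ p, h]

lemma insert_not_mem_erase (hℓ : 2 ≤ ℓ)
    (p : Finpartition (Finset.univ.filter fun i : Fin ℓ => (i : ℕ) < ℓ - 1)) :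
    insert (⟨ℓ - 1, by omega⟩ : Fin ℓ) (p.part ⟨0, by omega⟩)
      ∉ p.parts.erase (p.part ⟨0, by omega⟩) := by
  intro h
  exact L_not_mem hℓ (Finset.mem_of_mem_erase h) (Finset.mem_insert_self _ _)

lemma card_parts_insertLast (hℓ : 2 ≤ ℓ)
    (p : Finpartition (Finset.univ.filter fun i : Fin ℓ => (i : ℕ) < ℓ - 1)) :
    (insertLast hℓ p).parts.card = p.parts.card := by
  have hb0 := p.part_mem.mpr (z_mem_filter hℓ)
  have h1 : 1 ≤ p.parts.card := Finset.card_pos.mpr ⟨_, hb0⟩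
  rw [parts_insertLast_def hℓ p]
  rw [Finset.card_insert_of_notMem (insert_not_mem_erase hℓ p),
    Finset.card_erase_of_mem hb0]
  omega

lemma parts_image_erase (hℓ : 2 ≤ ℓ)
    (p : Finpartition (Finset.univ.filter fun i : Fin ℓ => (i : ℕ) < ℓ - 1)) :
    (insertLast hℓ p).parts.image (fun c => c.erase ⟨ℓ - 1, by omega⟩) = p.parts := by
  have hb0 := p.part_mem.mpr (z_mem_filter hℓ)
  rw [parts_insertLast_def hℓ p, Finset.image_insert]
  rw [Finset.erase_insert (L_not_mem hℓ hb0)]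
  have h2 : (p.parts.erase (p.part ⟨0, by omega⟩)).image
      (fun c => c.erase (⟨ℓ - 1, by omega⟩ : Fin ℓ)) = p.parts.erase (p.part ⟨0, by omega⟩) := by
    nth_rewrite 2 [← Finset.image_id (s := p.parts.erase (p.part ⟨0, by omega⟩))]
    refine Finset.image_congr fun t ht => ?_
    exact Finset.erase_eq_of_notMem (L_not_mem hℓ (Finset.mem_of_mem_erase ht))
  rw [h2, Finset.insert_erase hb0]

lemma insertLast_injective (hℓ : 2 ≤ ℓ) :
    Function.Injective (insertLast (ℓ := ℓ) hℓ) := by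
  intro p p' h
  apply Finpartition.ext
  rw [← parts_image_erase hℓ p, ← parts_image_erase hℓ p', h]

lemma not_reducible (hℓ : 2 ≤ ℓ) (q : Finpartition (Finset.univ : Finset (Fin ℓ)))
    {c : Finset (Fin ℓ)} (hc : c ∈ q.parts) (hz : (⟨0, by omega⟩ : Fin ℓ) ∈ c)
    (hL : (⟨ℓ - 1, by omega⟩ : Fin ℓ) ∈ c) : ¬ Reducible q := by
  rintro ⟨j, hj1, hjl, B, _, hBss, hBsup⟩
  have hzB : (⟨0, by omega⟩ : Fin ℓ) ∈ B.sup id := by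
    rw [hBsup]; simp; omega
  obtain ⟨b, hbB, hzb⟩ := Finset.mem_sup.mp hzB
  have hbq : b ∈ q.parts := hBss.subset hbB
  have hbc : b = c := q.eq_of_mem_parts hbq hc hzb hz
  subst hbc
  have hLB : (⟨ℓ - 1, by omega⟩ : Fin ℓ) ∈ B.sup id := (Finset.le_sup (f := id) hbB) hL
  rw [hBsup] at hLB
  simp at hLB
  omega

lemma z_ne_L (hℓ : 2 ≤ ℓ) : (⟨0, lt0 hℓ⟩ : Fin ℓ) ≠ ⟨ℓ - 1, lt1 hℓ⟩ := by
  rw [Ne, Fin.ext_iff]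
  simp
  omega

lemma L_not_mem_of_ne (hℓ : 2 ≤ ℓ) {q : Finpartition (Finset.univ : Finset (Fin ℓ))}
    {c t : Finset (Fin ℓ)} (hc : c ∈ q.parts) (hL : (⟨ℓ - 1, lt1 hℓ⟩ : Fin ℓ) ∈ c)
    (ht : t ∈ q.parts) (hne : t ≠ c) : (⟨ℓ - 1, lt1 hℓ⟩ : Fin ℓ) ∉ t := fun h =>
  hne (q.eq_of_mem_parts ht hc h hL)

/-- Remove `ℓ-1` from the block `c` (which contains `0` and `ℓ-1`). -/
def removeLast (hℓ : 2 ≤ ℓ) (q : Finpartition (Finset.univ : Finset (Fin ℓ)))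
    (c : Finset (Fin ℓ)) (hc : c ∈ q.parts) (hz : (⟨0, lt0 hℓ⟩ : Fin ℓ) ∈ c)
    (hL : (⟨ℓ - 1, lt1 hℓ⟩ : Fin ℓ) ∈ c) :
    Finpartition (Finset.univ.filter fun i : Fin ℓ => (i : ℕ) < ℓ - 1) where
  parts := insert (c.erase ⟨ℓ - 1, lt1 hℓ⟩) (q.parts.erase c)
  supIndep := by
    rw [Finset.supIndep_iff_pairwiseDisjoint, Finset.coe_insert]
    apply Set.PairwiseDisjoint.insert
    · exact (Finset.supIndep_iff_pairwiseDisjoint.mp q.supIndep).subset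
        (by intro x hx; exact Finset.mem_of_mem_erase hx)
    · intro t ht _
      rw [Finset.mem_coe, Finset.mem_erase] at ht
      show Disjoint (c.erase (⟨ℓ - 1, lt1 hℓ⟩ : Fin ℓ)) t
      exact Finset.disjoint_of_subset_left (Finset.erase_subset _ _)
        (q.disjoint hc ht.2 (Ne.symm ht.1))
  sup_parts := by
    ext x
    have hx := x.isLt
    simp only [Finset.sup_insert, id_eq, Finset.sup_eq_union, Finset.mem_union,
      Finset.mem_filter, Finset.mem_univ, true_and]
    constructor
    · rintro (h | h)
      · have := Finset.mem_erase.mp h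
        rw [Ne, Fin.ext_iff] at this
        have h2 := this.1
        simp only at h2
        omega
      · obtain ⟨t, htm, hxt⟩ := Finset.mem_sup.mp h
        rw [Finset.mem_erase] at htm
        have hLt := L_not_mem_of_ne hℓ hc hL htm.2 htm.1
        have : x ≠ (⟨ℓ - 1, lt1 hℓ⟩ : Fin ℓ) := fun hh => hLt (hh ▸ hxt)
        rw [Ne, Fin.ext_iff] at this
        simp only at this
        omega
    · intro hlt
      have hxL : x ≠ (⟨ℓ - 1, lt1 hℓ⟩ : Fin ℓ) := by
        rw [Ne, Fin.ext_iff]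
        simp only
        omega
      obtain ⟨t, ht, hxt⟩ := q.exists_mem (Finset.mem_univ x)
      by_cases htc : t = c
      · exact Or.inl (Finset.mem_erase.mpr ⟨hxL, htc ▸ hxt⟩)
      · refine Or.inr (Finset.mem_sup.mpr ⟨t, Finset.mem_erase.mpr ⟨htc, ht⟩, ?_⟩)
        exact hxt
  bot_notMem := by
    rw [Finset.bot_eq_empty]
    intro h
    rcases Finset.mem_insert.mp h with h | h
    · have : (⟨0, lt0 hℓ⟩ : Fin ℓ) ∈ c.erase ⟨ℓ - 1, lt1 hℓ⟩ :=
        Finset.mem_erase.mpr ⟨z_ne_L hℓ, hz⟩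
      rw [← h] at this
      exact absurd this (Finset.notMem_empty _)
    · exact q.bot_notMem (Finset.mem_of_mem_erase h)

lemma erase_not_mem_erase (hℓ : 2 ≤ ℓ) (q : Finpartition (Finset.univ : Finset (Fin ℓ)))
    {c : Finset (Fin ℓ)} (hc : c ∈ q.parts) (hz : (⟨0, lt0 hℓ⟩ : Fin ℓ) ∈ c)
    (hL : (⟨ℓ - 1, lt1 hℓ⟩ : Fin ℓ) ∈ c) :
    c.erase ⟨ℓ - 1, lt1 hℓ⟩ ∉ q.parts.erase c := by
  intro h
  rw [Finset.mem_erase] at h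
  exact h.1 (q.eq_of_mem_parts h.2 hc (Finset.mem_erase.mpr ⟨z_ne_L hℓ, hz⟩) hz)

lemma card_parts_removeLast (hℓ : 2 ≤ ℓ) (q : Finpartition (Finset.univ : Finset (Fin ℓ)))
    {c : Finset (Fin ℓ)} (hc : c ∈ q.parts) (hz : (⟨0, lt0 hℓ⟩ : Fin ℓ) ∈ c)
    (hL : (⟨ℓ - 1, lt1 hℓ⟩ : Fin ℓ) ∈ c) :
    (removeLast hℓ q c hc hz hL).parts.card = q.parts.card := by
  have h1 : 1 ≤ q.parts.card := Finset.card_pos.mpr ⟨_, hc⟩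
  show (insert (c.erase ⟨ℓ - 1, lt1 hℓ⟩) (q.parts.erase c)).card = _
  rw [Finset.card_insert_of_notMem (erase_not_mem_erase hℓ q hc hz hL),
    Finset.card_erase_of_mem hc]
  omega

lemma insertLast_removeLast (hℓ : 2 ≤ ℓ) (q : Finpartition (Finset.univ : Finset (Fin ℓ)))
    {c : Finset (Fin ℓ)} (hc : c ∈ q.parts) (hz : (⟨0, lt0 hℓ⟩ : Fin ℓ) ∈ c)
    (hL : (⟨ℓ - 1, lt1 hℓ⟩ : Fin ℓ) ∈ c) :
    insertLast hℓ (removeLast hℓ q c hc hz hL) = q := by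
  apply Finpartition.ext
  rw [parts_insertLast hℓ _ (b := c.erase ⟨ℓ - 1, lt1 hℓ⟩) (Finset.mem_insert_self _ _)
    (Finset.mem_erase.mpr ⟨z_ne_L hℓ, hz⟩)]
  rw [Finset.insert_erase hL]
  show insert c ((insert (c.erase ⟨ℓ - 1, lt1 hℓ⟩) (q.parts.erase c)).erase
    (c.erase ⟨ℓ - 1, lt1 hℓ⟩)) = q.parts
  rw [Finset.erase_insert (erase_not_mem_erase hℓ q hc hz hL)]
  exact Finset.insert_erase hc

lemma map_castLE (hℓ : 2 ≤ ℓ) :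
    (Finset.univ : Finset (Fin (ℓ - 1))).map (Fin.castLEEmb (by omega : ℓ - 1 ≤ ℓ))
      = Finset.univ.filter (fun i : Fin ℓ => (i : ℕ) < ℓ - 1) := by
  ext x
  simp only [Finset.mem_map, Finset.mem_univ, true_and, Finset.mem_filter,
    Fin.castLEEmb_apply]
  constructor
  · rintro ⟨a, rfl⟩
    exact a.isLt
  · intro hx
    exact ⟨⟨(x : ℕ), hx⟩, by simp [Fin.ext_iff]⟩

/-- Number of n-partitions of the filtered set equals `S (ℓ-1) n`. -/
lemma card_partitions_filter (hℓ : 2 ≤ ℓ) (n : ℕ) :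
    Nat.card {p : Finpartition (Finset.univ.filter fun i : Fin ℓ => (i : ℕ) < ℓ - 1) //
      p.parts.card = n} = S (ℓ - 1) n := by
  classical
  set f : Fin (ℓ - 1) ↪ Fin ℓ := Fin.castLEEmb (by omega : ℓ - 1 ≤ ℓ)
  set g : Finpartition (Finset.univ : Finset (Fin (ℓ - 1))) →
      Finpartition (Finset.univ.filter fun i : Fin ℓ => (i : ℕ) < ℓ - 1) :=
    fun P => (mapEmbed f P).copy (map_castLE hℓ) with hg
  have hcard : ∀ P, (g P).parts.card = P.parts.card := by
    intro P
    show ((mapEmbed f P).copy (map_castLE hℓ)).parts.card = _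
    rw [Finpartition.copy_parts, parts_mapEmbed, Finset.card_map]
  have hinj : Function.Injective g := by
    intro P Q h
    apply mapEmbed_injective f
    apply Finpartition.ext
    have := congrArg Finpartition.parts h
    simpa only [hg, Finpartition.copy_parts] using this
  have hsurj : Function.Surjective g := by
    intro R
    obtain ⟨P, hP⟩ := mapEmbed_surjective f Finset.univ (R.copy (map_castLE hℓ).symm)
    refine ⟨P, ?_⟩
    apply Finpartition.ext
    show (mapEmbed f P).parts = R.parts
    rw [hP]
    rfl
  have e : {P : Finpartition (Finset.univ : Finset (Fin (ℓ - 1))) // P.parts.card = n} ≃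
      {p : Finpartition (Finset.univ.filter fun i : Fin ℓ => (i : ℕ) < ℓ - 1) //
        p.parts.card = n} :=
    Equiv.subtypeEquiv (Equiv.ofBijective g ⟨hinj, hsurj⟩)
      (fun P => by show _ ↔ (g P).parts.card = n; rw [hcard])
  rw [S]
  exact Nat.card_congr e.symm

end StirlingAux

/-- Inserting the element `ℓ - 1` into the block containing `0` is a bijection from the
`n`-partitions of `{0, …, ℓ-2}` onto the irreducible `n`-partitions of `Fin ℓ` in which
`0` and `ℓ - 1` lie in the same block; in particular the number of the latter is
`S(ℓ-1, n)`. -/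
theorem insert_last_bijection (ℓ n : ℕ) (hℓ : 2 ≤ ℓ) (hn : 1 ≤ n) :
    (∃ f : Finpartition (Finset.univ.filter fun i : Fin ℓ => (i : ℕ) < ℓ - 1) →
           Finpartition (Finset.univ : Finset (Fin ℓ)),
      (∀ p b, b ∈ p.parts → (⟨0, by omega⟩ : Fin ℓ) ∈ b →
        (f p).parts = insert (insert (⟨ℓ - 1, by omega⟩ : Fin ℓ) b) (p.parts.erase b)) ∧
      Set.BijOn f {p | p.parts.card = n}
        {q | q.parts.card = n ∧ ¬ Reducible q ∧
          ∃ c ∈ q.parts, (⟨0, by omega⟩ : Fin ℓ) ∈ c ∧ (⟨ℓ - 1, by omega⟩ : Fin ℓ) ∈ c}) ∧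
    Nat.card {q : Finpartition (Finset.univ : Finset (Fin ℓ)) //
        q.parts.card = n ∧ ¬ Reducible q ∧
        ∃ c ∈ q.parts, (⟨0, by omega⟩ : Fin ℓ) ∈ c ∧ (⟨ℓ - 1, by omega⟩ : Fin ℓ) ∈ c}
      = S (ℓ - 1) n := by
  classical
  have hbij : Set.BijOn (StirlingAux.insertLast hℓ)
      {p : Finpartition (Finset.univ.filter fun i : Fin ℓ => (i : ℕ) < ℓ - 1) |
        p.parts.card = n}
      {q : Finpartition (Finset.univ : Finset (Fin ℓ)) | q.parts.card = n ∧ ¬ Reducible q ∧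
        ∃ c ∈ q.parts, (⟨0, by omega⟩ : Fin ℓ) ∈ c ∧ (⟨ℓ - 1, by omega⟩ : Fin ℓ) ∈ c} := by
    refine ⟨?_, ?_, ?_⟩
    · intro p hp
      simp only [Set.mem_setOf_eq] at hp ⊢
      have hcmem : insert (⟨ℓ - 1, StirlingAux.lt1 hℓ⟩ : Fin ℓ) (p.part ⟨0, StirlingAux.lt0 hℓ⟩)
          ∈ (StirlingAux.insertLast hℓ p).parts := by
        rw [StirlingAux.parts_insertLast_def hℓ p]
        exact Finset.mem_insert_self _ _
      have hzmem : (⟨0, StirlingAux.lt0 hℓ⟩ : Fin ℓ)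
          ∈ insert (⟨ℓ - 1, StirlingAux.lt1 hℓ⟩ : Fin ℓ) (p.part ⟨0, StirlingAux.lt0 hℓ⟩) :=
        Finset.mem_insert_of_mem (p.mem_part (StirlingAux.z_mem_filter hℓ))
      refine ⟨by rw [StirlingAux.card_parts_insertLast hℓ p]; exact hp, ?_, ?_⟩
      · exact StirlingAux.not_reducible hℓ _ hcmem hzmem (Finset.mem_insert_self _ _)
      · exact ⟨_, hcmem, hzmem, Finset.mem_insert_self _ _⟩
    · exact (StirlingAux.insertLast_injective hℓ).injOn
    · intro q hq
      obtain ⟨hqc, -, c, hc, hz, hL⟩ := hq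
      refine ⟨StirlingAux.removeLast hℓ q c hc hz hL, ?_, ?_⟩
      · show (StirlingAux.removeLast hℓ q c hc hz hL).parts.card = n
        rw [StirlingAux.card_parts_removeLast hℓ q hc hz hL]
        exact hqc
      · exact StirlingAux.insertLast_removeLast hℓ q hc hz hL
  constructor
  · exact ⟨StirlingAux.insertLast hℓ,
      fun p b hb hzb => StirlingAux.parts_insertLast hℓ p hb hzb, hbij⟩
  · calc Nat.card {q : Finpartition (Finset.univ : Finset (Fin ℓ)) //
          q.parts.card = n ∧ ¬ Reducible q ∧
          ∃ c ∈ q.parts, (⟨0, by omega⟩ : Fin ℓ) ∈ c ∧ (⟨ℓ - 1, by omega⟩ : Fin ℓ) ∈ c}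
        = Nat.card {p : Finpartition (Finset.univ.filter fun i : Fin ℓ => (i : ℕ) < ℓ - 1) //
            p.parts.card = n} :=
          Nat.card_congr ((Set.BijOn.equiv _ hbij).symm.trans
            (Equiv.subtypeEquivRight fun p => Iff.rfl))
      _ = S (ℓ - 1) n := StirlingAux.card_partitions_filter hℓ n
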